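/- Assume the expectation Gram matrix is positive semidefinite at grade n. Then for every real inner product space and every family of vectors (V_w), |⟨(id−E)∘id, (id−E)∘S⟩| ≤ ‖(id−E)∘id‖², where the inner product is taken over the words of length n; in particular the quantity ‖(id−E)∘id‖² + ⟨(id−E)∘id, (id−E)∘S⟩ is nonnegative. -/

import Mathlib

open Finsupp

/-- Words over the alphabet `A = {0,1,…,d}`. -/
abbrev Word (d : ℕ) : Type := List (Fin (d+1))

/-- The free real vector space with basis the set of all words. -/
abbrev KA (d : ℕ) : Type := Word d →₀ ℝ

/-- Shuffle product of two words, as an element of `KA d`. -/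
noncomputable def shuffleWord (d : ℕ) : Word d → Word d → KA d
  | [], v => Finsupp.single v 1
  | a :: u, [] => Finsupp.single (a :: u) 1
  | a :: u, b :: v =>
      Finsupp.mapDomain (List.cons a) (shuffleWord d u (b :: v)) +
      Finsupp.mapDomain (List.cons b) (shuffleWord d (a :: u) v)
  termination_by u v => u.length + v.length

/-- Bilinear extension of the shuffle product to `KA d`. -/
noncomputable def sh (d : ℕ) (x y : KA d) : KA d :=
  x.sum fun u cu => y.sum fun v cv => (cu * cv) • shuffleWord d u v

/-- Admissible words: concatenations of blocks each of which is the single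
letter `0` or a pair `aa` with `a ≠ 0`. -/
inductive Admissible (d : ℕ) : Word d → Prop
  | nil : Admissible d []
  | zero {w : Word d} : Admissible d w → Admissible d (0 :: w)
  | pair {w : Word d} (a : Fin (d+1)) : a ≠ 0 → Admissible d w →
      Admissible d (a :: a :: w)

/-- Number of `0` letters. -/
def zc (d : ℕ) (w : Word d) : ℕ := w.count 0

/-- Half the number of nonzero letters. -/
def dc (d : ℕ) (w : Word d) : ℕ := (w.length - w.count 0) / 2

def nc (d : ℕ) (w : Word d) : ℕ := zc d w + dc d w

open Classical in
/-- The expectation map on words. -/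
noncomputable def Ebar (d : ℕ) (t : ℝ) (w : Word d) : ℝ :=
  if Admissible d w then t ^ nc d w / (2 ^ dc d w * Nat.factorial (nc d w)) else 0

/-- Linear extension of the expectation map to `KA d`. -/
noncomputable def EbarL (d : ℕ) (t : ℝ) (x : KA d) : ℝ :=
  x.sum fun w c => c * Ebar d t w

/-- The linear endomorphism of `KA d` determined by values on basis words. -/
noncomputable def wordLift (d : ℕ) (f : Word d → KA d) : KA d →ₗ[ℝ] KA d :=
  Finsupp.lsum ℝ fun w => LinearMap.toSpanSingleton ℝ (KA d) (f w)

/-- The identity endomorphism `id`. -/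
noncomputable def idE (d : ℕ) : KA d →ₗ[ℝ] KA d := LinearMap.id

/-- The reversal endomorphism `|S|`. -/
noncomputable def revE (d : ℕ) : KA d →ₗ[ℝ] KA d :=
  wordLift d fun w => Finsupp.single w.reverse 1

/-- The antipode `S`. -/
noncomputable def Sa (d : ℕ) : KA d →ₗ[ℝ] KA d :=
  wordLift d fun w => Finsupp.single w.reverse ((-1 : ℝ) ^ w.length)

/-- The convolution unit `ν`. -/
noncomputable def nuE (d : ℕ) : KA d →ₗ[ℝ] KA d :=
  wordLift d fun w => if w = [] then Finsupp.single ([] : Word d) 1 else 0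

/-- The expectation endomorphism `E`. -/
noncomputable def EE (d : ℕ) (t : ℝ) : KA d →ₗ[ℝ] KA d :=
  wordLift d fun w => Finsupp.single ([] : Word d) (Ebar d t w)

/-- The convolution product `X ⋆ Y`. -/
noncomputable def conv (d : ℕ) (X Y : KA d →ₗ[ℝ] KA d) : KA d →ₗ[ℝ] KA d :=
  wordLift d fun w => ∑ k ∈ Finset.range (w.length + 1),
    sh d (X (Finsupp.single (w.take k) 1)) (Y (Finsupp.single (w.drop k) 1))

/-- Convolution powers, `X^{⋆0} = ν`. -/
noncomputable def convPow (d : ℕ) (X : KA d →ₗ[ℝ] KA d) : ℕ → (KA d →ₗ[ℝ] KA d)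
  | 0 => nuE d
  | k + 1 => conv d X (convPow d X k)

/-- The inner product `⟨X,Y⟩` of endomorphisms, taken over the words of
length `n`, relative to the family of vectors `Vf`. -/
noncomputable def ip (d : ℕ) (t : ℝ) {H : Type*} [NormedAddCommGroup H]
    [InnerProductSpace ℝ H] (Vf : Word d → H) (n : ℕ)
    (X Y : KA d →ₗ[ℝ] KA d) : ℝ :=
  ∑ u : Fin n → Fin (d+1), ∑ v : Fin n → Fin (d+1),
    EbarL d t (sh d (X (Finsupp.single (List.ofFn u) 1))
                    (Y (Finsupp.single (List.ofFn v) 1))) *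
      (inner ℝ (Vf (List.ofFn u)) (Vf (List.ofFn v)) : ℝ)

/-- Positive semidefiniteness of the expectation Gram matrix at grade `n`:
indexed by the words of length `n` together with the empty word. -/
def gramPSD (d n : ℕ) (t : ℝ) : Prop :=
  ∀ c : Option (Fin n → Fin (d+1)) → ℝ,
    0 ≤ ∑ x : Option (Fin n → Fin (d+1)), ∑ y : Option (Fin n → Fin (d+1)),
      c x * c y *
        EbarL d t (shuffleWord d (x.elim ([] : Word d) List.ofFn)
                                 (y.elim ([] : Word d) List.ofFn))


lemma shuffleWord_nil_left (d : ℕ) (v : Word d) : shuffleWord d [] v = Finsupp.single v 1 := by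
  rw [shuffleWord]

lemma shuffleWord_nil_right (d : ℕ) (u : Word d) : shuffleWord d u [] = Finsupp.single u 1 := by
  cases u <;> rw [shuffleWord]

lemma shuffleWord_cons_cons (d : ℕ) (a b : Fin (d+1)) (u v : Word d) :
    shuffleWord d (a :: u) (b :: v) =
      Finsupp.mapDomain (List.cons a) (shuffleWord d u (b :: v)) +
      Finsupp.mapDomain (List.cons b) (shuffleWord d (a :: u) v) := by
  rw [shuffleWord]

lemma mapDomain_swap (d : ℕ) (f g : Word d → Word d) (h : ∀ w, f (g w) = g (f w)) (s : KA d) :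
    Finsupp.mapDomain f (Finsupp.mapDomain g s) = Finsupp.mapDomain g (Finsupp.mapDomain f s) := by
  rw [← Finsupp.mapDomain_comp, ← Finsupp.mapDomain_comp]
  exact Finsupp.mapDomain_congr fun w _ => h w

lemma shuffleWord_comm (d : ℕ) (u v : Word d) : shuffleWord d u v = shuffleWord d v u := by
  induction u generalizing v with
  | nil => rw [shuffleWord_nil_left, shuffleWord_nil_right]
  | cons a u ihu =>
    induction v with
    | nil => rw [shuffleWord_nil_left, shuffleWord_nil_right]
    | cons b v ihv =>
      rw [shuffleWord_cons_cons, shuffleWord_cons_cons, ihu (b :: v), ihv, add_comm]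

lemma snoc_base (d : ℕ) (a b : Fin (d+1)) :
    shuffleWord d [a] [b] =
      Finsupp.mapDomain (· ++ [a]) (shuffleWord d [] [b]) +
      Finsupp.mapDomain (· ++ [b]) (shuffleWord d [a] []) := by
  simp only [shuffleWord_cons_cons, shuffleWord_nil_left, shuffleWord_nil_right,
    Finsupp.mapDomain_single, List.cons_append, List.nil_append]
  rw [add_comm]

lemma snoc_aux (d : ℕ) : ∀ (N : ℕ) (u v : Word d) (a b : Fin (d+1)), u.length + v.length ≤ N →
    shuffleWord d (u ++ [a]) (v ++ [b]) =
      Finsupp.mapDomain (· ++ [a]) (shuffleWord d u (v ++ [b])) +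
      Finsupp.mapDomain (· ++ [b]) (shuffleWord d (u ++ [a]) v) := by
  intro N
  induction N with
  | zero =>
    rintro u v a b h
    have hu : u = [] := List.eq_nil_of_length_eq_zero (by omega)
    have hv : v = [] := List.eq_nil_of_length_eq_zero (by omega)
    subst hu; subst hv
    simpa using snoc_base d a b
  | succ N ih =>
    rintro u v a b h
    match u, v with
    | [], [] => simpa using snoc_base d a b
    | c :: u, [] =>
      have H := ih u [] a b (by simp at h ⊢; omega)
      simp only [List.nil_append, List.cons_append, shuffleWord_nil_right,
        shuffleWord_cons_cons] at H ⊢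
      rw [H]
      simp only [Finsupp.mapDomain_add, Finsupp.mapDomain_single,
        List.cons_append, List.append_assoc, List.singleton_append]
      rw [mapDomain_swap d (· ++ [a]) (List.cons c) (fun w => by simp)]
      abel
    | [], e :: v =>
      have H := ih [] v a b (by simp at h ⊢; omega)
      simp only [List.nil_append, List.cons_append, shuffleWord_nil_left,
        shuffleWord_cons_cons] at H ⊢
      rw [H]
      simp only [Finsupp.mapDomain_add, Finsupp.mapDomain_single,
        List.cons_append, List.append_assoc, List.singleton_append]
      rw [mapDomain_swap d (· ++ [b]) (List.cons e) (fun w => by simp)]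
      abel
    | c :: u, e :: v =>
      have H1 := ih u (e :: v) a b (by simp at h ⊢; omega)
      have H2 := ih (c :: u) v a b (by simp at h ⊢; omega)
      simp only [List.nil_append, List.cons_append, shuffleWord_cons_cons] at H1 H2 ⊢
      rw [H1, H2]
      simp only [Finsupp.mapDomain_add]
      rw [mapDomain_swap d (· ++ [a]) (List.cons c) (fun w => by simp),
        mapDomain_swap d (· ++ [b]) (List.cons c) (fun w => by simp),
        mapDomain_swap d (· ++ [a]) (List.cons e) (fun w => by simp),
        mapDomain_swap d (· ++ [b]) (List.cons e) (fun w => by simp)]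
      abel

lemma shuffleWord_snoc (d : ℕ) (u v : Word d) (a b : Fin (d+1)) :
    shuffleWord d (u ++ [a]) (v ++ [b]) =
      Finsupp.mapDomain (· ++ [a]) (shuffleWord d u (v ++ [b])) +
      Finsupp.mapDomain (· ++ [b]) (shuffleWord d (u ++ [a]) v) :=
  snoc_aux d (u.length + v.length) u v a b le_rfl

lemma rev_aux (d : ℕ) : ∀ (N : ℕ) (u v : Word d), u.length + v.length ≤ N →
    Finsupp.mapDomain List.reverse (shuffleWord d u v) =
      shuffleWord d u.reverse v.reverse := by
  intro N
  induction N with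
  | zero =>
    rintro u v h
    have hu : u = [] := List.eq_nil_of_length_eq_zero (by omega)
    have hv : v = [] := List.eq_nil_of_length_eq_zero (by omega)
    subst hu; subst hv
    simp [shuffleWord_nil_left, Finsupp.mapDomain_single]
  | succ N ih =>
    rintro u v h
    match u, v with
    | [], v => simp [shuffleWord_nil_left, Finsupp.mapDomain_single]
    | a :: u, [] => simp [shuffleWord_nil_right, Finsupp.mapDomain_single]
    | a :: u, b :: v =>
      rw [shuffleWord_cons_cons, Finsupp.mapDomain_add,
        ← Finsupp.mapDomain_comp, ← Finsupp.mapDomain_comp]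
      have e1 : (List.reverse ∘ List.cons a : Word d → Word d) = (· ++ [a]) ∘ List.reverse := by
        funext w; simp
      have e2 : (List.reverse ∘ List.cons b : Word d → Word d) = (· ++ [b]) ∘ List.reverse := by
        funext w; simp
      rw [e1, e2, Finsupp.mapDomain_comp, Finsupp.mapDomain_comp,
        ih u (b :: v) (by simp at h ⊢; omega), ih (a :: u) v (by simp at h ⊢; omega),
        List.reverse_cons, List.reverse_cons, shuffleWord_snoc]

lemma shuffleWord_reverse (d : ℕ) (u v : Word d) :
    Finsupp.mapDomain List.reverse (shuffleWord d u v) =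
      shuffleWord d u.reverse v.reverse :=
  rev_aux d (u.length + v.length) u v le_rfl

lemma Admissible.append {d : ℕ} {u v : Word d} (hu : Admissible d u) (hv : Admissible d v) :
    Admissible d (u ++ v) := by
  induction hu with
  | nil => simpa using hv
  | zero _ ih => exact Admissible.zero ih
  | pair a ha _ ih => exact Admissible.pair a ha ih

lemma Admissible.reverse {d : ℕ} {w : Word d} (hw : Admissible d w) :
    Admissible d w.reverse := by
  induction hw with
  | nil => exact Admissible.nil
  | zero _ ih =>
    rw [List.reverse_cons]
    exact ih.append (Admissible.zero Admissible.nil)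
  | pair a ha _ ih =>
    rw [List.reverse_cons, List.reverse_cons, List.append_assoc]
    exact ih.append (by simpa using Admissible.pair a ha Admissible.nil)

lemma admissible_reverse_iff {d : ℕ} (w : Word d) :
    Admissible d w.reverse ↔ Admissible d w :=
  ⟨fun h => by simpa using h.reverse, Admissible.reverse⟩

lemma Ebar_reverse (d : ℕ) (t : ℝ) (w : Word d) : Ebar d t w.reverse = Ebar d t w := by
  rw [Ebar, Ebar]
  have h1 : nc d w.reverse = nc d w := by
    simp [nc, zc, dc, List.count_reverse, List.length_reverse]
  have h2 : dc d w.reverse = dc d w := by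
    simp [dc, List.count_reverse, List.length_reverse]
  rw [h1, h2]
  by_cases h : Admissible d w
  · rw [if_pos h, if_pos (h.reverse)]
  · rw [if_neg h, if_neg (fun hc => h (by simpa using hc.reverse))]

lemma Ebar_nil (d : ℕ) (t : ℝ) : Ebar d t ([] : Word d) = 1 := by
  rw [Ebar, if_pos Admissible.nil]
  simp [nc, zc, dc]

lemma EbarL_single (d : ℕ) (t : ℝ) (w : Word d) (c : ℝ) :
    EbarL d t (Finsupp.single w c) = c * Ebar d t w :=
  Finsupp.sum_single_index (zero_mul _)

lemma EbarL_add (d : ℕ) (t : ℝ) (x y : KA d) :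
    EbarL d t (x + y) = EbarL d t x + EbarL d t y :=
  Finsupp.sum_add_index' (fun _ => zero_mul _) (fun _ b₁ b₂ => add_mul b₁ b₂ _)

lemma EbarL_smul (d : ℕ) (t : ℝ) (c : ℝ) (x : KA d) :
    EbarL d t (c • x) = c * EbarL d t x := by
  rw [EbarL, Finsupp.sum_smul_index (h := fun w c => c * Ebar d t w) (fun w => zero_mul _), EbarL, Finsupp.mul_sum]
  exact Finsupp.sum_congr fun w _ => by ring

lemma EbarL_mapDomain_reverse (d : ℕ) (t : ℝ) (x : KA d) :
    EbarL d t (Finsupp.mapDomain List.reverse x) = EbarL d t x := by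
  rw [EbarL, Finsupp.sum_mapDomain_index (h := fun w c => c * Ebar d t w)
    (fun w => zero_mul _) (fun w b₁ b₂ => add_mul b₁ b₂ _)]
  exact Finsupp.sum_congr fun w _ => by rw [Ebar_reverse]

lemma sh_single_single (d : ℕ) (u v : Word d) (a b : ℝ) :
    sh d (Finsupp.single u a) (Finsupp.single v b) = (a * b) • shuffleWord d u v := by
  rw [sh, Finsupp.sum_single_index, Finsupp.sum_single_index]
  · simp
  · simp

lemma sh_add_left (d : ℕ) (x y z : KA d) : sh d (x + y) z = sh d x z + sh d y z := by
  refine Finsupp.sum_add_index' (fun u => ?_) (fun u b₁ b₂ => ?_)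
  · simp
  · rw [← Finsupp.sum_add]
    exact Finsupp.sum_congr fun v _ => by rw [add_mul, add_smul]

lemma sh_add_right (d : ℕ) (x y z : KA d) : sh d x (y + z) = sh d x y + sh d x z := by
  rw [sh, sh, sh, ← Finsupp.sum_add]
  refine Finsupp.sum_congr fun u _ => ?_
  exact Finsupp.sum_add_index' (fun v => by simp) (fun v b₁ b₂ => by rw [mul_add, add_smul])

lemma wordLift_single (d : ℕ) (f : Word d → KA d) (w : Word d) (c : ℝ) :
    wordLift d f (Finsupp.single w c) = c • f w := by
  rw [wordLift, Finsupp.lsum_single]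
  rfl

noncomputable def ee (d : ℕ) (t : ℝ) (u v : Word d) : ℝ := EbarL d t (shuffleWord d u v)

lemma ee_nil_right (d : ℕ) (t : ℝ) (u : Word d) : ee d t u [] = Ebar d t u := by
  rw [ee, shuffleWord_nil_right, EbarL_single, one_mul]

lemma ee_nil_left (d : ℕ) (t : ℝ) (v : Word d) : ee d t [] v = Ebar d t v := by
  rw [ee, shuffleWord_nil_left, EbarL_single, one_mul]

lemma ee_comm (d : ℕ) (t : ℝ) (u v : Word d) : ee d t u v = ee d t v u := by
  rw [ee, ee, shuffleWord_comm]

lemma ee_reverse (d : ℕ) (t : ℝ) (u v : Word d) :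
    ee d t u.reverse v.reverse = ee d t u v := by
  rw [ee, ee, ← shuffleWord_reverse, EbarL_mapDomain_reverse]

lemma expand (d : ℕ) (t : ℝ) (u v : Word d) (a a' b b' : ℝ) :
    EbarL d t (sh d (Finsupp.single u a + Finsupp.single ([] : Word d) a')
      (Finsupp.single v b + Finsupp.single ([] : Word d) b')) =
      a * b * ee d t u v + a * b' * Ebar d t u + a' * b * Ebar d t v + a' * b' := by
  rw [sh_add_left, sh_add_right, sh_add_right, EbarL_add, EbarL_add, EbarL_add,
    sh_single_single, sh_single_single, sh_single_single, sh_single_single,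
    EbarL_smul, EbarL_smul, EbarL_smul, EbarL_smul]
  rw [← ee, ← ee, ← ee, ← ee, ee_nil_right, ee_nil_left, ee_nil_left, Ebar_nil]
  ring

/-- `Bf` is the centered kernel. -/
noncomputable def Bf (d : ℕ) (t : ℝ) (u v : Word d) : ℝ :=
  ee d t u v - Ebar d t u * Ebar d t v

lemma Bf_comm (d : ℕ) (t : ℝ) (u v : Word d) : Bf d t u v = Bf d t v u := by
  rw [Bf, Bf, ee_comm]; ring

lemma Bf_reverse (d : ℕ) (t : ℝ) (u v : Word d) :
    Bf d t u.reverse v.reverse = Bf d t u v := by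
  rw [Bf, Bf, ee_reverse, Ebar_reverse, Ebar_reverse]

lemma Xapply (d : ℕ) (t : ℝ) (w : Word d) :
    ((idE d - EE d t) ∘ₗ idE d) (Finsupp.single w 1) =
      Finsupp.single w 1 + Finsupp.single ([] : Word d) (-(Ebar d t w)) := by
  simp only [LinearMap.comp_apply, idE, LinearMap.id_apply, LinearMap.sub_apply]
  rw [EE, wordLift_single, one_smul, sub_eq_add_neg, ← Finsupp.single_neg]

lemma Yapply (d : ℕ) (t : ℝ) (w : Word d) :
    ((idE d - EE d t) ∘ₗ Sa d) (Finsupp.single w 1) =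
      Finsupp.single w.reverse ((-1 : ℝ) ^ w.length) +
      Finsupp.single ([] : Word d) (-((-1 : ℝ) ^ w.length * Ebar d t w.reverse)) := by
  simp only [LinearMap.comp_apply, idE, LinearMap.id_apply, LinearMap.sub_apply]
  rw [Sa, wordLift_single, one_smul, EE, wordLift_single, Finsupp.smul_single,
    smul_eq_mul, sub_eq_add_neg, ← Finsupp.single_neg]

lemma summandXX (d : ℕ) (t : ℝ) (u v : Word d) :
    EbarL d t (sh d (((idE d - EE d t) ∘ₗ idE d) (Finsupp.single u 1))
      (((idE d - EE d t) ∘ₗ idE d) (Finsupp.single v 1))) = Bf d t u v := by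
  rw [Xapply, Xapply, expand, Bf]; ring

lemma summandXY (d : ℕ) (t : ℝ) (u v : Word d) :
    EbarL d t (sh d (((idE d - EE d t) ∘ₗ idE d) (Finsupp.single u 1))
      (((idE d - EE d t) ∘ₗ Sa d) (Finsupp.single v 1))) =
      (-1 : ℝ) ^ v.length * Bf d t u v.reverse := by
  rw [Xapply, Yapply, expand, Bf]; ring

lemma EbarL_shuffle_nil_left (d : ℕ) (t : ℝ) (w : Word d) :
    EbarL d t (shuffleWord d [] w) = Ebar d t w := by
  rw [shuffleWord_nil_left, EbarL_single, one_mul]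

lemma EbarL_shuffle_nil_right (d : ℕ) (t : ℝ) (w : Word d) :
    EbarL d t (shuffleWord d w []) = Ebar d t w := by
  rw [shuffleWord_nil_right, EbarL_single, one_mul]

lemma M_psd (d n : ℕ) (t : ℝ) (hPSD : gramPSD d n t) :
    (Matrix.of fun u v : Fin n → Fin (d+1) =>
      Bf d t (List.ofFn u) (List.ofFn v)).PosSemidef := by
  refine Matrix.PosSemidef.of_dotProduct_mulVec_nonneg ?_ ?_
  · ext u v
    simp only [Matrix.conjTranspose_apply, Matrix.of_apply, star_trivial]
    exact Bf_comm d t _ _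
  · intro x
    set T := ∑ u : Fin n → Fin (d+1), x u * Ebar d t (List.ofFn u) with hT
    have key := hPSD (fun o => o.elim (-T) x)
    simp only [Fintype.sum_option, Option.elim_none, Option.elim_some,
      EbarL_shuffle_nil_left, EbarL_shuffle_nil_right] at key
    rw [Ebar_nil] at key
    have e1 : ∑ v : Fin n → Fin (d+1), -T * x v * Ebar d t (List.ofFn v) = -(T * T) := by
      calc ∑ v : Fin n → Fin (d+1), -T * x v * Ebar d t (List.ofFn v)
          = ∑ v : Fin n → Fin (d+1), -T * (x v * Ebar d t (List.ofFn v)) :=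
            Finset.sum_congr rfl fun v _ => by ring
        _ = -T * T := by rw [← Finset.mul_sum, ← hT]
        _ = -(T * T) := by ring
    have e2 : ∑ u : Fin n → Fin (d+1),
        (x u * -T * Ebar d t (List.ofFn u) +
          ∑ v : Fin n → Fin (d+1), x u * x v *
            EbarL d t (shuffleWord d (List.ofFn u) (List.ofFn v)))
        = -(T * T) + ∑ u : Fin n → Fin (d+1), ∑ v : Fin n → Fin (d+1),
            x u * x v * EbarL d t (shuffleWord d (List.ofFn u) (List.ofFn v)) := by
      rw [Finset.sum_add_distrib]
      congr 1
      calc ∑ u : Fin n → Fin (d+1), x u * -T * Ebar d t (List.ofFn u)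
          = ∑ u : Fin n → Fin (d+1), -T * (x u * Ebar d t (List.ofFn u)) :=
            Finset.sum_congr rfl fun u _ => by ring
        _ = -T * T := by rw [← Finset.mul_sum, ← hT]
        _ = -(T * T) := by ring
    rw [e1, e2] at key
    have expand_goal : dotProduct (star x) (Matrix.mulVec (Matrix.of fun u v : Fin n → Fin (d+1) =>
        Bf d t (List.ofFn u) (List.ofFn v)) x) =
        (∑ u : Fin n → Fin (d+1), ∑ v : Fin n → Fin (d+1),
          x u * x v * EbarL d t (shuffleWord d (List.ofFn u) (List.ofFn v))) - T * T := by
      simp only [dotProduct, Matrix.mulVec, Pi.star_apply, star_trivial,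
        Matrix.of_apply, Bf, ee]
      rw [hT, Finset.sum_mul_sum, ← Finset.sum_sub_distrib]
      refine Finset.sum_congr rfl fun u _ => ?_
      rw [Finset.mul_sum, ← Finset.sum_sub_distrib]
      exact Finset.sum_congr rfl fun v _ => by ring
    rw [expand_goal]
    linarith [key]

lemma ofFn_reverse' {α : Type*} {n : ℕ} (f : Fin n → α) :
    (List.ofFn f).reverse = List.ofFn (fun i => f i.rev) := by
  apply List.ext_getElem
  · simp
  · intro i h1 h2
    simp only [List.getElem_reverse, List.getElem_ofFn]
    congr 1
    simp only [List.length_reverse, List.length_ofFn] at h1 h2 ⊢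
    ext
    simp [Fin.rev]
    omega

theorem stmt_2 (d n : ℕ) (hd : 1 ≤ d) (hn : 1 ≤ n) (t : ℝ) (ht : 0 < t)
    (hPSD : gramPSD d n t)
    {H : Type*} [NormedAddCommGroup H] [InnerProductSpace ℝ H]
    (Vf : Word d → H) :
    |ip d t Vf n ((idE d - EE d t) ∘ₗ idE d) ((idE d - EE d t) ∘ₗ Sa d)|
      ≤ ip d t Vf n ((idE d - EE d t) ∘ₗ idE d) ((idE d - EE d t) ∘ₗ idE d) ∧
    0 ≤ ip d t Vf n ((idE d - EE d t) ∘ₗ idE d) ((idE d - EE d t) ∘ₗ idE d)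
        + ip d t Vf n ((idE d - EE d t) ∘ₗ idE d) ((idE d - EE d t) ∘ₗ Sa d) := by
  classical
  set σ : (Fin n → Fin (d+1)) → (Fin n → Fin (d+1)) := fun u i => u i.rev with hσ
  set G : (Fin n → Fin (d+1)) → (Fin n → Fin (d+1)) → ℝ :=
    fun u v => (inner ℝ (Vf (List.ofFn u)) (Vf (List.ofFn v)) : ℝ) with hG
  set M : Matrix (Fin n → Fin (d+1)) (Fin n → Fin (d+1)) ℝ :=
    Matrix.of (fun u v => Bf d t (List.ofFn u) (List.ofFn v)) with hM
  have hMpsd := M_psd d n t hPSD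
  obtain ⟨R, hRsa, -, hRR0⟩ := open MatrixOrder in
    CFC.exists_sqrt_of_isSelfAdjoint_of_quasispectrumRestricts hMpsd.isHermitian
      (QuasispectrumRestricts.nnreal_of_nonneg hMpsd.nonneg)
  have hRR : R * R = M := hRR0
  have hRsym : ∀ i j, R j i = R i j := fun i j => by
    simpa using (show R.IsHermitian from hRsa).apply i j
  have hMentry : ∀ u v, M u v = ∑ k, R u k * R k v := fun u v => by
    rw [← hRR, Matrix.mul_apply]
  have hofσ : ∀ u : Fin n → Fin (d+1), List.ofFn (σ u) = (List.ofFn u).reverse :=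
    fun u => (ofFn_reverse' u).symm
  have hMσ : ∀ u v, M (σ u) (σ v) = M u v := fun u v => by
    simp only [hM, Matrix.of_apply, hofσ]
    exact Bf_reverse d t _ _
  set A : (Fin n → Fin (d+1)) → H := fun k =>
    ∑ u : Fin n → Fin (d+1), R u k • Vf (List.ofFn u) with hA
  set C : (Fin n → Fin (d+1)) → H := fun k =>
    ∑ v : Fin n → Fin (d+1), R k (σ v) • Vf (List.ofFn v) with hC
  have hAC : ∀ k, (inner ℝ (A k) (C k) : ℝ) =
      ∑ u : Fin n → Fin (d+1), ∑ v : Fin n → Fin (d+1), R u k * R k (σ v) * G u v := by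
    intro k
    simp only [hA, hC, sum_inner, inner_sum, real_inner_smul_left, real_inner_smul_right]
    rw [Finset.sum_comm]
    exact Finset.sum_congr rfl fun u _ => Finset.sum_congr rfl fun v _ => by
      rw [hG]; ring
  have hAA : ∀ k, (inner ℝ (A k) (A k) : ℝ) =
      ∑ u : Fin n → Fin (d+1), ∑ v : Fin n → Fin (d+1), R u k * R v k * G u v := by
    intro k
    simp only [hA, sum_inner, inner_sum, real_inner_smul_left, real_inner_smul_right]
    rw [Finset.sum_comm]
    exact Finset.sum_congr rfl fun u _ => Finset.sum_congr rfl fun v _ => by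
      rw [hG]; ring
  have hCC : ∀ k, (inner ℝ (C k) (C k) : ℝ) =
      ∑ u : Fin n → Fin (d+1), ∑ v : Fin n → Fin (d+1), R k (σ u) * R k (σ v) * G u v := by
    intro k
    simp only [hC, sum_inner, inner_sum, real_inner_smul_left, real_inner_smul_right]
    rw [Finset.sum_comm]
    exact Finset.sum_congr rfl fun u _ => Finset.sum_congr rfl fun v _ => by
      rw [hG]; ring
  have sAC : ∑ k : Fin n → Fin (d+1), (inner ℝ (A k) (C k) : ℝ) =
      ∑ u : Fin n → Fin (d+1), ∑ v : Fin n → Fin (d+1), M u (σ v) * G u v := by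
    simp only [hAC]
    rw [Finset.sum_comm]
    refine Finset.sum_congr rfl fun u _ => ?_
    rw [Finset.sum_comm]
    refine Finset.sum_congr rfl fun v _ => ?_
    rw [hMentry u (σ v), Finset.sum_mul]
  have sAA : ∑ k : Fin n → Fin (d+1), (inner ℝ (A k) (A k) : ℝ) =
      ∑ u : Fin n → Fin (d+1), ∑ v : Fin n → Fin (d+1), M u v * G u v := by
    simp only [hAA]
    rw [Finset.sum_comm]
    refine Finset.sum_congr rfl fun u _ => ?_
    rw [Finset.sum_comm]
    refine Finset.sum_congr rfl fun v _ => ?_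
    rw [hMentry u v, Finset.sum_mul]
    exact Finset.sum_congr rfl fun k _ => by rw [hRsym v k]
  have sCC : ∑ k : Fin n → Fin (d+1), (inner ℝ (C k) (C k) : ℝ) =
      ∑ u : Fin n → Fin (d+1), ∑ v : Fin n → Fin (d+1), M u v * G u v := by
    simp only [hCC]
    rw [Finset.sum_comm]
    refine Finset.sum_congr rfl fun u _ => ?_
    rw [Finset.sum_comm]
    refine Finset.sum_congr rfl fun v _ => ?_
    rw [← hMσ u v, hMentry (σ u) (σ v), Finset.sum_mul]
    exact Finset.sum_congr rfl fun k _ => by rw [hRsym (σ u) k]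
  have hipXX : ip d t Vf n ((idE d - EE d t) ∘ₗ idE d) ((idE d - EE d t) ∘ₗ idE d) =
      ∑ u : Fin n → Fin (d+1), ∑ v : Fin n → Fin (d+1), M u v * G u v := by
    unfold ip
    refine Finset.sum_congr rfl fun u _ => Finset.sum_congr rfl fun v _ => ?_
    rw [summandXX]
    simp only [hM, hG, Matrix.of_apply]
  have hipXY : ip d t Vf n ((idE d - EE d t) ∘ₗ idE d) ((idE d - EE d t) ∘ₗ Sa d) =
      (-1 : ℝ) ^ n * ∑ u : Fin n → Fin (d+1), ∑ v : Fin n → Fin (d+1), M u (σ v) * G u v := by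
    unfold ip
    rw [Finset.mul_sum]
    refine Finset.sum_congr rfl fun u _ => ?_
    rw [Finset.mul_sum]
    refine Finset.sum_congr rfl fun v _ => ?_
    rw [summandXY, List.length_ofFn, ← hofσ v]
    simp only [hM, hG, Matrix.of_apply]
    ring
  set P : ℝ := ∑ u : Fin n → Fin (d+1), ∑ v : Fin n → Fin (d+1), M u v * G u v with hP
  have hP0 : 0 ≤ P := by
    rw [← sAA]
    exact Finset.sum_nonneg fun k _ => real_inner_self_nonneg
  have hA2 : ∑ k : Fin n → Fin (d+1), ‖A k‖ ^ 2 = P := by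
    rw [← sAA]
    exact Finset.sum_congr rfl fun k _ => (real_inner_self_eq_norm_sq _).symm
  have hC2 : ∑ k : Fin n → Fin (d+1), ‖C k‖ ^ 2 = P := by
    rw [← sCC]
    exact Finset.sum_congr rfl fun k _ => (real_inner_self_eq_norm_sq _).symm
  have h1 : |∑ k : Fin n → Fin (d+1), (inner ℝ (A k) (C k) : ℝ)| ≤
      ∑ k : Fin n → Fin (d+1), ‖A k‖ * ‖C k‖ :=
    (Finset.abs_sum_le_sum_abs _ _).trans
      (Finset.sum_le_sum fun k _ => abs_real_inner_le_norm _ _)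
  have h2 : (∑ k : Fin n → Fin (d+1), ‖A k‖ * ‖C k‖) ^ 2 ≤ P * P := by
    calc (∑ k : Fin n → Fin (d+1), ‖A k‖ * ‖C k‖) ^ 2
        ≤ (∑ k : Fin n → Fin (d+1), ‖A k‖ ^ 2) * ∑ k : Fin n → Fin (d+1), ‖C k‖ ^ 2 :=
          Finset.sum_mul_sq_le_sq_mul_sq _ _ _
      _ = P * P := by rw [hA2, hC2]
  have h3 : ∑ k : Fin n → Fin (d+1), ‖A k‖ * ‖C k‖ ≤ P := by
    have hnn : 0 ≤ ∑ k : Fin n → Fin (d+1), ‖A k‖ * ‖C k‖ :=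
      Finset.sum_nonneg fun k _ => mul_nonneg (norm_nonneg _) (norm_nonneg _)
    calc ∑ k : Fin n → Fin (d+1), ‖A k‖ * ‖C k‖
        = Real.sqrt ((∑ k : Fin n → Fin (d+1), ‖A k‖ * ‖C k‖) ^ 2) := (Real.sqrt_sq hnn).symm
      _ ≤ Real.sqrt (P * P) := Real.sqrt_le_sqrt h2
      _ = P := Real.sqrt_mul_self hP0
  have hQ : |ip d t Vf n ((idE d - EE d t) ∘ₗ idE d) ((idE d - EE d t) ∘ₗ Sa d)| ≤ P := by
    rw [hipXY, abs_mul, abs_pow, abs_neg, abs_one, one_pow, one_mul, ← sAC]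
    exact h1.trans h3
  constructor
  · rw [hipXX]
    exact hQ
  · have := neg_abs_le (ip d t Vf n ((idE d - EE d t) ∘ₗ idE d) ((idE d - EE d t) ∘ₗ Sa d))
    rw [hipXX]
    linarith
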